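/- For every prime power q and every integer n ≥ 1, there exists a simple bipartite graph G = (X, Y, E) of girth at least 6 with every vertex of X having degree q+1, every vertex of Y having degree p_n(q), |Y| = p_{n+1}(q), and |X| = p_{n+1}(q)·p_n(q)/(q+1), where p_n(q) = (q^{n+1}−1)/(q−1). -/

import Mathlib

/-- `p n q = q^n + q^{n-1} + ... + q + 1 = (q^{n+1} - 1)/(q - 1)`. -/
def p (q n : ℕ) : ℕ := ∑ i ∈ Finset.range (n + 1), q ^ i

lemma geom (q d : ℕ) (hq : 1 ≤ q) : (q - 1) * p q d + 1 = q ^ (d + 1) := by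
  obtain ⟨r, rfl⟩ : ∃ r, q = r + 1 := ⟨q - 1, by omega⟩
  induction d with
  | zero => simp [p]
  | succ d ih =>
    have : p (r+1) (d+1) = p (r+1) d + (r+1)^(d+1) := by
      simp [p, Finset.sum_range_succ]
    rw [this]
    simp only [Nat.add_sub_cancel] at *
    ring_nf
    ring_nf at ih
    omega

open Module Submodule

lemma nat_card_ne_zero {α : Type} [Finite α] [Zero α] :
    Nat.card {v : α // v ≠ 0} = Nat.card α - 1 := by
  classical
  haveI := Fintype.ofFinite α
  rw [Nat.card_eq_fintype_card, Nat.card_eq_fintype_card]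
  have : Fintype.card {v : α // ¬ (v = 0)} =
      Fintype.card α - Fintype.card {v : α // v = 0} := Fintype.card_subtype_compl _
  simpa [Fintype.card_subtype_eq] using this

lemma card_one_dim {F V : Type} [Field F] [Fintype F] [AddCommGroup V] [Module F V]
    [FiniteDimensional F V] (d : ℕ) (h : finrank F V = d + 1) :
    Nat.card {W : Submodule F V // finrank F W = 1} = p (Fintype.card F) d := by
  classical
  set q := Fintype.card F with hqdef
  have hq2 : 2 ≤ q := Fintype.one_lt_card
  haveI : Finite V := Module.finite_iff_finite.mp ‹_›
  haveI : Fintype V := Fintype.ofFinite V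
  haveI : Finite (Submodule F V) :=
    Finite.of_injective (fun W => (W : Set V)) SetLike.coe_injective
  set L := {W : Submodule F V // finrank F W = 1} with hL
  haveI : Fintype L := Fintype.ofFinite L
  -- the map from nonzero vectors to lines
  set f : {v : V // v ≠ 0} → L :=
    fun v => ⟨Submodule.span F {v.1}, finrank_span_singleton v.2⟩ with hf
  have fiber_card : ∀ W : L, Nat.card {v // f v = W} = q - 1 := by
    intro W
    have e : {v // f v = W} ≃ {w : W.1 // w ≠ 0} := by
      refine ⟨fun v => ⟨⟨v.1.1, ?_⟩, by simp [Subtype.ext_iff, v.1.2]⟩,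
        fun w => ⟨⟨w.1.1, fun hz => w.2 (Subtype.ext hz)⟩, ?_⟩,
        fun v => by ext; rfl, fun w => by ext; rfl⟩
      · have := congrArg Subtype.val v.2
        simp only [hf] at this
        rw [← this]
        exact Submodule.mem_span_singleton_self _
      · have hw0 : (w.1 : V) ≠ 0 := fun hz => w.2 (by ext; simpa using hz)
        apply Subtype.ext
        apply Submodule.eq_of_le_of_finrank_eq
        · exact (Submodule.span_singleton_le_iff_mem _ _).mpr w.1.2
        · rw [finrank_span_singleton hw0, W.2]
    rw [Nat.card_congr e, nat_card_ne_zero]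
    haveI : Fintype W.1 := Fintype.ofFinite _
    have cW : Nat.card W.1 = q ^ 1 := by
      rw [Nat.card_eq_fintype_card, card_eq_pow_finrank (K := F) (V := W.1), W.2]
    rw [cW]; simp
  have key : (q ^ (d+1) - 1) = (Fintype.card L) * (q - 1) := by
    have e := Equiv.sigmaFiberEquiv f
    have c1 : Nat.card {v : V // v ≠ 0} = q ^ (d+1) - 1 := by
      rw [nat_card_ne_zero, Nat.card_eq_fintype_card,
        card_eq_pow_finrank (K := F) (V := V), h]
    rw [← c1, ← Nat.card_congr e, Nat.card_eq_fintype_card, Fintype.card_sigma]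
    rw [Finset.sum_congr rfl (fun W _ => by
      rw [← Nat.card_eq_fintype_card, fiber_card W])]
    simp [Finset.sum_const, mul_comm]
  have hg := geom q d (by omega)
  rw [Nat.card_eq_fintype_card]
  have h2 : p q d * (q - 1) = q ^ (d+1) - 1 := by rw [mul_comm]; omega
  exact Nat.eq_of_mul_eq_mul_right (by omega) (key.symm.trans h2.symm)

lemma finrank_comap_mkQ {F V : Type} [Field F] [AddCommGroup V] [Module F V]
    [FiniteDimensional F V] (W : Submodule F V) (U' : Submodule F (V ⧸ W)) :
    finrank F (comap W.mkQ U') = finrank F U' + finrank F W := by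
  set U := comap W.mkQ U' with hU
  have hWU : W ≤ U := Submodule.le_comap_mkQ W U'
  set f : U →ₗ[F] V ⧸ W := W.mkQ ∘ₗ U.subtype with hfdef
  have hrange : LinearMap.range f = U' := by
    rw [hfdef, LinearMap.range_comp, Submodule.range_subtype]
    exact Submodule.map_comap_eq_of_surjective (Submodule.mkQ_surjective W) U'
  have hker : LinearMap.ker f = comap U.subtype W := by
    rw [hfdef, LinearMap.ker_comp, Submodule.ker_mkQ]
  have rn := LinearMap.finrank_range_add_finrank_ker f
  rw [hrange, hker] at rn
  rw [← rn, LinearEquiv.finrank_eq (Submodule.comapSubtypeEquivOfLe hWU)]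

lemma card_lines_in_plane {F V : Type} [Field F] [Fintype F] [AddCommGroup V] [Module F V]
    [FiniteDimensional F V] (U : Submodule F V) (hU : finrank F U = 2) :
    Nat.card {W : Submodule F V // finrank F W = 1 ∧ W ≤ U} = Fintype.card F + 1 := by
  have e : {W' : Submodule F U // finrank F W' = 1} ≃
      {W : Submodule F V // finrank F W = 1 ∧ W ≤ U} :=
    ((Submodule.MapSubtype.orderIso U).toEquiv.subtypeEquiv (fun W' => by
        rw [show ((Submodule.MapSubtype.orderIso U).toEquiv W').1
            = Submodule.map U.subtype W' from rfl, Submodule.finrank_map_subtype_eq])).trans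
      ((Equiv.subtypeSubtypeEquivSubtypeInter _ _).trans
        (Equiv.subtypeEquivRight (fun W => and_comm)))
  rw [← Nat.card_congr e, card_one_dim 1 hU]
  simp [p, Finset.sum_range_succ, add_comm]

lemma card_planes_through_line {F V : Type} [Field F] [Fintype F] [AddCommGroup V] [Module F V]
    [FiniteDimensional F V] (W : Submodule F V) (hW : finrank F W = 1) (m : ℕ)
    (hV : finrank F V = m + 2) :
    Nat.card {U : Submodule F V // finrank F U = 2 ∧ W ≤ U} = p (Fintype.card F) m := by
  have key : ∀ U' : Submodule F (V ⧸ W), finrank F (comap W.mkQ U') = finrank F U' + 1 := by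
    intro U'; rw [finrank_comap_mkQ, hW]
  have e : {U' : Submodule F (V ⧸ W) // finrank F U' = 1} ≃
      {U : Submodule F V // finrank F U = 2 ∧ W ≤ U} :=
    ((Submodule.comapMkQRelIso W).toEquiv.subtypeEquiv (fun U' => by
        rw [show ((Submodule.comapMkQRelIso W).toEquiv U').1
            = comap W.mkQ U' from rfl, key U']; omega)).trans
      ((Equiv.subtypeSubtypeEquivSubtypeInter _ _).trans
        (Equiv.subtypeEquivRight (fun U => and_comm)))
  rw [← Nat.card_congr e]
  have hq : finrank F (V ⧸ W) = m + 1 := by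
    have := Submodule.finrank_quotient_add_finrank W
    rw [hW, hV] at this; omega
  exact card_one_dim m hq

lemma plane_unique {F V : Type} [Field F] [AddCommGroup V] [Module F V]
    [FiniteDimensional F V] {U U' W W' : Submodule F V}
    (hU : finrank F U = 2) (hU' : finrank F U' = 2)
    (hW : finrank F W = 1) (hW' : finrank F W' = 1) (hne : W ≠ W')
    (h1 : W ≤ U) (h2 : W' ≤ U) (h3 : W ≤ U') (h4 : W' ≤ U') : U = U' := by
  have hsup : ∀ T : Submodule F V, finrank F T = 2 → W ≤ T → W' ≤ T → W ⊔ W' = T := by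
    intro T hT hWT hW'T
    apply Submodule.eq_of_le_of_finrank_eq (sup_le hWT hW'T)
    have hle : finrank F (W ⊔ W' : Submodule F V) ≤ 2 := hT ▸ Submodule.finrank_mono (sup_le hWT hW'T)
    have hlt : W < W ⊔ W' := by
      rcases lt_or_eq_of_le (le_sup_left : W ≤ W ⊔ W') with h | h
      · exact h
      · exfalso
        exact hne (Submodule.eq_of_le_of_finrank_eq (h ▸ le_sup_right : W' ≤ W)
          (hW'.trans hW.symm)).symm
    have := Submodule.finrank_lt_finrank_of_lt hlt
    rw [hW] at this
    omega
  rw [← hsup U hU h1 h2, hsup U' hU' h3 h4]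

open Finset in
lemma double_count {F V : Type} [Field F] [Fintype F] [AddCommGroup V] [Module F V]
    [FiniteDimensional F V] [Finite V] (n : ℕ) (hV : finrank F V = n + 2) :
    Nat.card {U : Submodule F V // finrank F U = 2} * (Fintype.card F + 1)
      = p (Fintype.card F) (n + 1) * p (Fintype.card F) n := by
  classical
  haveI : Finite (Submodule F V) :=
    Finite.of_injective (fun W => (W : Set V)) SetLike.coe_injective
  set X := {U : Submodule F V // finrank F U = 2} with hX
  set Y := {W : Submodule F V // finrank F W = 1} with hY
  haveI : Fintype X := Fintype.ofFinite X
  haveI : Fintype Y := Fintype.ofFinite Y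
  set Fl := {z : X × Y // z.2.1 ≤ z.1.1} with hFl
  haveI : Fintype Fl := Fintype.ofFinite Fl
  have eA : Fl ≃ Σ U : X, {y : Y // y.1 ≤ U.1} :=
    ⟨fun z => ⟨z.1.1, ⟨z.1.2, z.2⟩⟩, fun s => ⟨(s.1, s.2.1), s.2.2⟩,
      fun z => by rfl, fun s => by rfl⟩
  have eB : Fl ≃ Σ W : Y, {x : X // W.1 ≤ x.1} :=
    ⟨fun z => ⟨z.1.2, ⟨z.1.1, z.2⟩⟩, fun s => ⟨(s.2.1, s.1), s.2.2⟩,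
      fun z => by rfl, fun s => by rfl⟩
  have cA : Nat.card Fl = Nat.card X * (Fintype.card F + 1) := by
    rw [Nat.card_congr eA, Nat.card_eq_fintype_card, Fintype.card_sigma]
    rw [Finset.sum_congr rfl (fun U _ => by
      rw [← Nat.card_eq_fintype_card,
        Nat.card_congr (Equiv.subtypeSubtypeEquivSubtypeInter
          (fun W : Submodule F V => finrank F W = 1) (fun W => W ≤ U.1)),
        card_lines_in_plane U.1 U.2])]
    simp [Nat.card_eq_fintype_card, mul_comm]
  have cB : Nat.card Fl = Nat.card Y * p (Fintype.card F) n := by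
    rw [Nat.card_congr eB, Nat.card_eq_fintype_card, Fintype.card_sigma]
    rw [Finset.sum_congr rfl (fun W _ => by
      rw [← Nat.card_eq_fintype_card,
        Nat.card_congr (Equiv.subtypeSubtypeEquivSubtypeInter
          (fun U : Submodule F V => finrank F U = 2) (fun U => W.1 ≤ U)),
        card_planes_through_line W.1 W.2 n hV])]
    simp [Nat.card_eq_fintype_card, mul_comm]
  rw [← cA, cB, card_one_dim (n+1) hV]

/-- Main existence theorem: for every prime power `q` and `n ≥ 1` there is a
simple bipartite graph of girth at least `6` (no `4`-cycles) with `X`-degrees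
`q+1`, `Y`-degrees `p_n(q)`, `|Y| = p_{n+1}(q)`, and
`|X| = p_{n+1}(q)·p_n(q)/(q+1)`. -/
theorem stmt15 {q : ℕ} (hq : IsPrimePow q) (n : ℕ) (hn : 1 ≤ n) :
    ∃ E : Fin (p q (n + 1) * p q n / (q + 1)) → Fin (p q (n + 1)) → Prop,
      (∀ x, Nat.card {y // E x y} = q + 1) ∧
      (∀ y, Nat.card {x // E x y} = p q n) ∧
      ¬ ∃ x x' y y', x ≠ x' ∧ y ≠ y' ∧ E x y ∧ E x' y ∧ E x y' ∧ E x' y' := by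
  classical
  obtain ⟨pp, k, hp, hk, hqe⟩ := hq
  haveI : Fact pp.Prime := ⟨Nat.prime_iff.mpr hp⟩
  set F := GaloisField pp k with hF
  haveI : Fintype F := Fintype.ofFinite F
  have hcard : Fintype.card F = q := by
    rw [← Nat.card_eq_fintype_card]
    have := GaloisField.card pp k (by omega : k ≠ 0)
    rw [this]; exact hqe
  set V := Fin (n + 2) → F with hV
  have hdim : finrank F V = n + 2 := Module.finrank_fin_fun F
  haveI : Finite V := by
    haveI : Finite F := Finite.of_fintype F
    infer_instance
  haveI : Finite (Submodule F V) :=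
    Finite.of_injective (fun W => (W : Set V)) SetLike.coe_injective
  set X := {U : Submodule F V // finrank F U = 2} with hX
  set Y := {W : Submodule F V // finrank F W = 1} with hY
  haveI : Fintype X := Fintype.ofFinite X
  haveI : Fintype Y := Fintype.ofFinite Y
  have cardY : Nat.card Y = p q (n + 1) := by
    rw [card_one_dim (n+1) hdim, hcard]
  have dc := double_count (F := F) (V := V) n hdim
  rw [hcard] at dc
  have cardX : Nat.card X = p q (n + 1) * p q n / (q + 1) := by
    rw [← dc, Nat.mul_div_cancel _ (by omega)]
  have eX : X ≃ Fin (p q (n + 1) * p q n / (q + 1)) :=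
    Fintype.equivFinOfCardEq (by rw [← Nat.card_eq_fintype_card, cardX])
  have eY : Y ≃ Fin (p q (n + 1)) :=
    Fintype.equivFinOfCardEq (by rw [← Nat.card_eq_fintype_card, cardY])
  refine ⟨fun i j => ((eY.symm j).1 : Submodule F V) ≤ (eX.symm i).1, ?_, ?_, ?_⟩
  · intro x
    rw [Nat.card_congr ((eY.symm.subtypeEquiv (fun j => Iff.rfl)).trans
      (Equiv.subtypeSubtypeEquivSubtypeInter
        (fun W : Submodule F V => finrank F W = 1) (fun W => W ≤ (eX.symm x).1))),
      card_lines_in_plane (eX.symm x).1 (eX.symm x).2, hcard]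
  · intro y
    rw [Nat.card_congr ((eX.symm.subtypeEquiv (fun i => Iff.rfl)).trans
      (Equiv.subtypeSubtypeEquivSubtypeInter
        (fun U : Submodule F V => finrank F U = 2) (fun U => (eY.symm y).1 ≤ U))),
      card_planes_through_line (eY.symm y).1 (eY.symm y).2 n hdim, hcard]
  · rintro ⟨x, x', y, y', hxx, hyy, h1, h2, h3, h4⟩
    have hWne : ((eY.symm y).1 : Submodule F V) ≠ (eY.symm y').1 := by
      intro h
      exact hyy (eY.symm.injective (Subtype.ext h))
    have := plane_unique (eX.symm x).2 (eX.symm x').2 (eY.symm y).2 (eY.symm y').2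
      hWne h1 h3 h2 h4
    exact hxx (eX.symm.injective (Subtype.ext this))
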